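/- Let G = ⟨σ, τ⟩ ≅ D_{4n} be the dihedral group of order 8n and let M′′ = ℤ·y₁ ⊕ ℤ·y₂ with σ : y₁ ↔ y₂ and τ : y₁ ↦ −y₂, y₂ ↦ −y₁. Then H¹(⟨σ⟩, M′′) = 0 and H¹(G, M′′) ≅ ℤ/2ℤ. -/

import Mathlib

open groupCohomology

section AuxDihedralH1

variable {k G : Type} [CommRing k] [Group G] {A : Rep k G}

theorem aux_cocycle_mul (f : cocycles₁ A) (g h : G) :
    f (g * h) = A.ρ g (f h) + f g :=
  (mem_cocycles₁_iff (f : G → A)).1 f.2 g h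

theorem aux_rho_inv (g : G) (m : A) : A.ρ g⁻¹ (A.ρ g m) = m := by
  have : A.ρ g⁻¹ * A.ρ g = 1 := by rw [← map_mul, inv_mul_cancel, map_one]
  calc A.ρ g⁻¹ (A.ρ g m) = (A.ρ g⁻¹ * A.ρ g) m := rfl
    _ = m := by rw [this]; rfl

theorem aux_cocycle_zero (f : cocycles₁ A) {S : Set G}
    (hS : Subgroup.closure S = ⊤) (h0 : ∀ s ∈ S, f s = 0) (g : G) : f g = 0 := by
  let K : Subgroup G :=
  { carrier := {g | f g = 0}
    one_mem' := cocycles₁_map_one f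
    mul_mem' := by
      intro a c ha hc
      have ha' : f a = 0 := ha
      have hc' : f c = 0 := hc
      show f (a * c) = 0
      rw [aux_cocycle_mul f a c, ha', hc', map_zero, zero_add]
    inv_mem' := by
      intro a ha
      have ha' : f a = 0 := ha
      show f a⁻¹ = 0
      have h1 : A.ρ a (f a⁻¹) = 0 := by rw [cocycles₁_map_inv, ha', neg_zero]
      have h2 := congrArg (A.ρ a⁻¹) h1
      rwa [aux_rho_inv, map_zero] at h2 }
  have hK : ⊤ ≤ K := hS ▸ (Subgroup.closure_le K).2 h0
  exact hK (Subgroup.mem_top g)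

theorem aux_pow_trivial (f : cocycles₁ A) {h : G} (hh : ∀ m : A, A.ρ h m = m) :
    ∀ m : ℕ, f (h ^ m) = m • f h := by
  have hpow : ∀ (j : ℕ) (m : A), A.ρ (h ^ j) m = m := by
    intro j
    induction j with
    | zero => intro m; simp
    | succ i ih => intro m; rw [pow_succ, map_mul]
                   calc (A.ρ (h^i) * A.ρ h) m = A.ρ (h^i) (A.ρ h m) := rfl
                     _ = m := by rw [hh m]; exact ih m
  intro m
  induction m with
  | zero => simp
  | succ i ih =>
      rw [pow_succ, aux_cocycle_mul f (h ^ i) h, hpow, ih, succ_nsmul, add_comm]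

theorem aux_sigma_rel (f : cocycles₁ A) {g : G} {n : ℕ} (hg : g ^ (4 * n) = 1)
    (h2 : ∀ m : A, A.ρ (g ^ 2) m = m) :
    (2 * n) • (A.ρ g (f g) + f g) = 0 := by
  have h1 : f ((g ^ 2) ^ (2 * n)) = (2 * n) • f (g ^ 2) := aux_pow_trivial f h2 (2 * n)
  rw [← pow_mul, show 2 * (2 * n) = 4 * n by ring, hg, cocycles₁_map_one] at h1
  have h3 : f (g ^ 2) = A.ρ g (f g) + f g := by
    rw [pow_two]; exact aux_cocycle_mul f g g
  rw [h3] at h1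
  exact h1.symm

/-- The coboundary of `x`, as a one-cocycle. -/
noncomputable def auxCobound (A : Rep k G) (x : A) : cocycles₁ A :=
  ⟨d₀₁ A x, d₀₁_apply_mem_cocycles₁ x⟩

theorem auxCobound_apply (A : Rep k G) (x : A) (g : G) :
    auxCobound A x g = A.ρ g x - x := rfl

end AuxDihedralH1

set_option maxHeartbeats 1000000 in
/-- Let `G = ⟨σ, τ⟩ ≅ D_{4n}` be the dihedral group of order `8n` and let
`M'' = ℤ·y₁ ⊕ ℤ·y₂` with `σ : y₁ ↔ y₂` and `τ : y₁ ↦ -y₂, y₂ ↦ -y₁`.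
Then `H¹(⟨σ⟩, M'') = 0` and `H¹(G, M'') ≅ ℤ/2ℤ`. -/
theorem dihedral_rank_two_lattice_h1
    (n : ℕ) (hn : 0 < n) {G : Type} [Group G] (σ τ : G)
    (hσ : σ ^ (4 * n) = 1) (hτ : τ ^ 2 = 1) (hrel : τ⁻¹ * σ * τ = σ⁻¹)
    (hgen : Subgroup.closure {σ, τ} = ⊤) (hcard : Nat.card G = 8 * n)
    {M : Type} [AddCommGroup M] [Module ℤ M] (b : Module.Basis (Fin 2) ℤ M)
    (ρ : Representation ℤ G M)
    (hρσ0 : ρ σ (b 0) = b 1) (hρσ1 : ρ σ (b 1) = b 0)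
    (hρτ0 : ρ τ (b 0) = - b 1) (hρτ1 : ρ τ (b 1) = - b 0) :
    (∀ x : groupCohomology.H1 (Rep.of (ρ.comp (Subgroup.zpowers σ).subtype)), x = 0) ∧
    Nonempty (groupCohomology.H1 (Rep.of ρ) ≃ₗ[ℤ] ZMod 2) := by
  classical
  have hM := (AddCommGroup.uniqueIntModule (M := M)).uniq ‹Module ℤ M›
  subst hM
  -- basic linear algebra facts
  have hrepr : ∀ m : M, m = b.repr m 0 • b 0 + b.repr m 1 • b 1 := by
    intro m
    have h := b.sum_repr m
    rw [Fin.sum_univ_two] at h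
    exact h.symm
  have hmext : ∀ m : M, b.repr m 0 = 0 → b.repr m 1 = 0 → m = 0 := by
    intro m h0 h1
    rw [hrepr m, h0, h1, zero_smul, zero_smul, add_zero]
  have hσ2 : ∀ m : M, ρ σ (ρ σ m) = m := by
    intro m
    conv_lhs => rw [hrepr m]
    simp only [map_add, map_smul, hρσ0, hρσ1]
    exact (hrepr m).symm
  have hc0σ : ∀ m : M, b.repr (ρ σ m) 0 = b.repr m 1 := by
    intro m
    conv_lhs => rw [hrepr m]
    simp [map_add, map_smul, hρσ0, hρσ1, Finsupp.single_apply]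
  have hc1σ : ∀ m : M, b.repr (ρ σ m) 1 = b.repr m 0 := by
    intro m
    conv_lhs => rw [hrepr m]
    simp [map_add, map_smul, hρσ0, hρσ1, Finsupp.single_apply]
  have hc0τ : ∀ m : M, b.repr (ρ τ m) 0 = - b.repr m 1 := by
    intro m
    conv_lhs => rw [hrepr m]
    simp [map_add, map_smul, hρτ0, hρτ1, Finsupp.single_apply]
  have hc1τ : ∀ m : M, b.repr (ρ τ m) 1 = - b.repr m 0 := by
    intro m
    conv_lhs => rw [hrepr m]
    simp [map_add, map_smul, hρτ0, hρτ1, Finsupp.single_apply]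
  have hnz : (2 * n : ℤ) ≠ 0 := by positivity
  have hdiv : ∀ m : M, (2 * n) • m = 0 → m = 0 := by
    intro m hm
    have h0 := congrArg (fun z => b.repr z 0) hm
    have h1 := congrArg (fun z => b.repr z 1) hm
    simp only [map_nsmul, Finsupp.coe_smul, Pi.smul_apply, smul_eq_mul, map_zero,
      Finsupp.coe_zero, Pi.zero_apply, nsmul_eq_mul, Nat.cast_mul, Nat.cast_ofNat] at h0 h1
    apply hmext m
    · rcases mul_eq_zero.1 h0 with h | h
      · exact absurd (by exact_mod_cast h) hnz
      · exact h
    · rcases mul_eq_zero.1 h1 with h | h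
      · exact absurd (by exact_mod_cast h) hnz
      · exact h
  constructor
  · -- Part 1 : H¹(⟨σ⟩, M) = 0
    set A1 : Rep ℤ (Subgroup.zpowers σ) := Rep.of (ρ.comp (Subgroup.zpowers σ).subtype) with hA1
    letI : Module ℤ ↥(groupCohomology.cocycles₁ A1) := (groupCohomology.cocycles₁ A1).module
    intro x
    refine groupCohomology.H1_induction_on x fun f => ?_
    suffices hmem : ⇑f ∈ groupCohomology.coboundaries₁ A1 by
      exact (groupCohomology.H1π_eq_zero_iff f).2 hmem
    set σH : Subgroup.zpowers σ := ⟨σ, Subgroup.mem_zpowers σ⟩ with hσHdef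
    have hσHpow : σH ^ (4 * n) = 1 := by
      apply Subtype.ext
      rw [SubmonoidClass.coe_pow]
      exact hσ
    have htriv : ∀ m : A1, A1.ρ (σH ^ 2) m = m := by
      intro m
      show ρ ((σH ^ 2 : Subgroup.zpowers σ) : G) m = m
      have hc : ((σH ^ 2 : Subgroup.zpowers σ) : G) = σ * σ := by
        rw [SubmonoidClass.coe_pow, pow_two]
      rw [hc, map_mul]
      exact hσ2 m
    have h2n := aux_sigma_rel f hσHpow htriv
    obtain ⟨u, hu_def⟩ : ∃ u : M, u = f σH := ⟨f σH, rfl⟩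
    have hu : ρ σ u + u = 0 := by rw [hu_def]; exact hdiv _ h2n
    have ha : b.repr u 1 = - b.repr u 0 := by
      have h := congrArg (fun z => b.repr z 0) hu
      simp only [map_add, Finsupp.add_apply, map_zero, Finsupp.coe_zero, Pi.zero_apply,
        hc0σ] at h
      linarith
    set x0 : M := (b.repr u 0) • b 1 with hx0def
    have hx0 : ρ σ x0 - x0 = u := by
      rw [hx0def, LinearMap.map_smul, hρσ1]
      conv_rhs => rw [hrepr u, ha]
      module
    set c : groupCohomology.cocycles₁ A1 := auxCobound A1 x0 with hcdef
    have hfc : ∀ g, (f - c) g = 0 := by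
      apply aux_cocycle_zero (f - c) (S := {σH})
      · rw [eq_top_iff]
        rintro ⟨g, hg⟩ -
        obtain ⟨j, hj⟩ := Subgroup.mem_zpowers_iff.1 hg
        have hgeq : σH ^ j = (⟨g, hg⟩ : Subgroup.zpowers σ) := by
          apply Subtype.ext
          rw [SubgroupClass.coe_zpow]
          exact hj
        rw [Subgroup.mem_closure_singleton]
        exact ⟨j, hgeq⟩
      · intro s hs
        rw [Set.mem_singleton_iff] at hs
        subst hs
        have hcu : c σH = u := hx0
        have h1 : (f - c) σH = f σH - c σH := rfl
        rw [h1, sub_eq_zero]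
        exact hu_def.symm.trans hcu.symm
    refine ⟨x0, funext fun g => ?_⟩
    have h2 : f g - c g = 0 := hfc g
    rw [sub_eq_zero] at h2
    exact h2.symm
  · -- Part 2 : H¹(G, M) ≅ ℤ/2
    set A : Rep ℤ G := Rep.of ρ with hA
    letI : Module ℤ ↥(groupCohomology.cocycles₁ A) := (groupCohomology.cocycles₁ A).module
    set N : Submodule ℤ (groupCohomology.cocycles₁ A) := LinearMap.ker (groupCohomology.H1π A).hom
      with hN
    -- the evaluation functional
    set evf : groupCohomology.cocycles₁ A → ZMod 2 :=
      fun f => (((b.repr (f σ) 0 + b.repr (f τ) 0 : ℤ) : ZMod 2)) with hevf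
    have hevadd : ∀ f g : groupCohomology.cocycles₁ A, evf (f + g) = evf f + evf g := by
      intro f g
      have h1 : (f + g) σ = f σ + g σ := rfl
      have h2 : (f + g) τ = f τ + g τ := rfl
      rw [hevf]
      simp only [h1, h2, map_add, Finsupp.add_apply]
      push_cast
      ring
    have hevsmul : ∀ (r : ℤ) (f : groupCohomology.cocycles₁ A),
        evf (r • f) = r • evf f := by
      intro r f
      have h1 : (r • f) σ = r • (f σ) := rfl
      have h2 : (r • f) τ = r • (f τ) := rfl
      rw [hevf]
      simp only [h1, h2, map_smul, Finsupp.smul_apply, smul_eq_mul, zsmul_eq_mul]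
      push_cast
      ring
    set ev : groupCohomology.cocycles₁ A →ₗ[ℤ] ZMod 2 :=
      { toFun := evf, map_add' := hevadd, map_smul' := hevsmul } with hev
    have hker : N ≤ LinearMap.ker ev := by
      intro f hf
      obtain ⟨x, hx⟩ := (groupCohomology.H1π_eq_zero_iff f).1 hf
      obtain ⟨xM, hxM⟩ : ∃ y : M, y = x := ⟨x, rfl⟩
      have hfσ : f σ = ρ σ xM - xM := by
        rw [hxM]
        exact (congrFun hx σ).symm
      have hfτ : f τ = ρ τ xM - xM := by
        rw [hxM]
        exact (congrFun hx τ).symm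
      show evf f = 0
      have he : evf f = (((b.repr (f σ) 0 + b.repr (f τ) 0 : ℤ) : ZMod 2)) := rfl
      rw [he, hfσ, hfτ]
      simp only [map_sub, Finsupp.sub_apply, hc0σ, hc0τ]
      rw [show b.repr xM 1 - b.repr xM 0 + (- b.repr xM 1 - b.repr xM 0) = 2 * (- b.repr xM 0)
        by ring]
      exact (ZMod.intCast_zmod_eq_zero_iff_dvd _ 2).2 ⟨- b.repr xM 0, rfl⟩
    set Φ : (groupCohomology.cocycles₁ A ⧸ N) →ₗ[ℤ] ZMod 2 :=
      Submodule.liftQ (N) ev hker with hΦ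
    have hΦmk : ∀ f : groupCohomology.cocycles₁ A,
        Φ ((N).mkQ f) = evf f := by
      intro f
      exact LinearMap.congr_fun
        (Submodule.liftQ_mkQ (N) ev hker) f
    -- the sign character cocycle
    set w : M := b 0 - b 1 with hw
    have hwne : ¬ (w = -w) := by
      intro h
      have h0 := congrArg (fun z => b.repr z 0) h
      simp [hw, map_sub, map_neg, Finsupp.single_apply] at h0
    have hPσ : ρ σ w = -w := by rw [hw, map_sub, hρσ0, hρσ1, neg_sub]
    have hPτ : ρ τ w = w := by rw [hw, map_sub, hρτ0, hρτ1]; abel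
    have hinvρ : ∀ (g : G) (m : M), ρ g⁻¹ (ρ g m) = m := by
      intro g m
      have h1 : ρ g⁻¹ * ρ g = 1 := by rw [← map_mul, inv_mul_cancel, map_one]
      calc ρ g⁻¹ (ρ g m) = (ρ g⁻¹ * ρ g) m := rfl
        _ = m := by rw [h1]; rfl
    have hKw : ∀ g : G, ρ g w = w ∨ ρ g w = -w := by
      let Kw : Subgroup G :=
      { carrier := {g | ρ g w = w ∨ ρ g w = -w}
        one_mem' := by left; simp
        mul_mem' := by
          rintro a c ha hc
          show ρ (a * c) w = w ∨ ρ (a * c) w = -w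
          have hac : ρ (a * c) w = ρ a (ρ c w) := by rw [map_mul]; rfl
          rcases ha with ha | ha <;> rcases hc with hc | hc
          · left; rw [hac, hc, ha]
          · right; rw [hac, hc, map_neg, ha]
          · right; rw [hac, hc, ha]
          · left; rw [hac, hc, map_neg, ha, neg_neg]
        inv_mem' := by
          rintro a ha
          rcases ha with ha | ha
          · left
            conv_lhs => rw [← ha]
            exact hinvρ a w
          · right
            have h1 := congrArg (ρ a⁻¹) ha
            rw [hinvρ, map_neg] at h1
            have h2 := congrArg Neg.neg h1
            rwa [neg_neg, eq_comm] at h2 }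
      intro g
      have h1 : ⊤ ≤ Kw := by
        rw [← hgen]
        apply (Subgroup.closure_le Kw).2
        intro s hs
        rcases hs with hs | hs
        · subst hs; exact Or.inr hPσ
        · rw [Set.mem_singleton_iff] at hs; subst hs; exact Or.inl hPτ
      exact h1 (Subgroup.mem_top g)
    set fε : G → M := fun g => if ρ g w = w then 0 else -w with hfε
    have hfε_pos : ∀ g, ρ g w = w → fε g = 0 := fun g h => if_pos h
    have hfε_neg : ∀ g, ρ g w = -w → fε g = -w := by
      intro g h
      apply if_neg
      intro hc
      rw [hc] at h
      exact hwne h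
    have hfεmem : fε ∈ groupCohomology.cocycles₁ A := by
      rw [groupCohomology.mem_cocycles₁_iff]
      intro g h
      show fε (g * h) = ρ g (fε h) + fε g
      have hmul : ∀ (g h : G), ρ (g * h) w = ρ g (ρ h w) := by
        intro g h; rw [map_mul]; rfl
      rcases hKw g with hg | hg <;> rcases hKw h with hh | hh
      · have hgh : ρ (g * h) w = w := by rw [hmul, hh, hg]
        rw [hfε_pos _ hgh, hfε_pos _ hg, hfε_pos _ hh, map_zero, add_zero]
      · have hgh : ρ (g * h) w = -w := by rw [hmul, hh, map_neg, hg]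
        rw [hfε_neg _ hgh, hfε_pos _ hg, hfε_neg _ hh, map_neg, hg, add_zero]
      · have hgh : ρ (g * h) w = -w := by rw [hmul, hh, hg]
        rw [hfε_neg _ hgh, hfε_neg _ hg, hfε_pos _ hh, map_zero, zero_add]
      · have hgh : ρ (g * h) w = w := by rw [hmul, hh, map_neg, hg, neg_neg]
        rw [hfε_pos _ hgh, hfε_neg _ hg, hfε_neg _ hh, map_neg, hg, neg_neg,
          add_neg_cancel]
    set F : groupCohomology.cocycles₁ A := ⟨fε, hfεmem⟩ with hF
    have hFσ : (F σ : M) = -w := hfε_neg σ hPσ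
    have hFτ : (F τ : M) = 0 := hfε_pos τ hPτ
    have hΦF : Φ ((N).mkQ F) = 1 := by
      rw [hΦmk]
      show (((b.repr (F σ) 0 + b.repr (F τ) 0 : ℤ) : ZMod 2)) = 1
      rw [hFσ, hFτ]
      have h1 : b.repr (-w) 0 = -1 := by
        rw [hw]; simp [map_sub, map_neg, Finsupp.single_apply]
      have h2 : b.repr (0 : M) 0 = 0 := by simp
      rw [h1, h2]
      decide
    have hsurj : Function.Surjective Φ := by
      intro z
      rcases (by decide : ∀ z : ZMod 2, z = 0 ∨ z = 1) z with rfl | rfl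
      · exact ⟨0, map_zero Φ⟩
      · exact ⟨(N).mkQ F, hΦF⟩
    have hinj : Function.Injective Φ := by
      rw [← LinearMap.ker_eq_bot, eq_bot_iff]
      rintro x hx
      obtain ⟨f, rfl⟩ := Submodule.mkQ_surjective (N) x
      rw [LinearMap.mem_ker, hΦmk] at hx
      rw [Submodule.mem_bot]
      suffices hmem : f ∈ N by
        rw [← Submodule.ker_mkQ N] at hmem
        exact LinearMap.mem_ker.1 hmem
      -- hx : evf f = 0
      obtain ⟨uσ, huσ_def⟩ : ∃ u : M, u = f σ := ⟨f σ, rfl⟩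
      obtain ⟨uτ, huτ_def⟩ : ∃ u : M, u = f τ := ⟨f τ, rfl⟩
      have hdvd : (2 : ℤ) ∣ (b.repr uσ 0 + b.repr uτ 0) := by
        have h1 : ((((b.repr uσ 0 + b.repr uτ 0 : ℤ)) : ZMod 2)) = 0 := by
          rw [huσ_def, huτ_def]; exact hx
        exact_mod_cast (ZMod.intCast_zmod_eq_zero_iff_dvd _ 2).1 h1
      obtain ⟨kk, hkk⟩ := hdvd
      -- σ relation
      have htrivσ : ∀ m : A, A.ρ (σ ^ 2) m = m := by
        intro m
        show ρ (σ ^ 2) m = m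
        rw [pow_two, map_mul]
        exact hσ2 m
      have h2n := aux_sigma_rel f hσ htrivσ
      have huσ : ρ σ uσ + uσ = 0 := by rw [huσ_def]; exact hdiv _ h2n
      have ha : b.repr uσ 1 = - b.repr uσ 0 := by
        have h := congrArg (fun z => b.repr z 0) huσ
        simp only [map_add, Finsupp.add_apply, map_zero, Finsupp.coe_zero, Pi.zero_apply,
          hc0σ] at h
        linarith
      -- τ relation
      have huτ : ρ τ uτ + uτ = 0 := by
        have h1 := aux_cocycle_mul f τ τ
        rw [← pow_two, hτ, groupCohomology.cocycles₁_map_one] at h1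
        rw [huτ_def]
        exact h1.symm
      have hcc : b.repr uτ 1 = b.repr uτ 0 := by
        have h := congrArg (fun z => b.repr z 0) huτ
        simp only [map_add, Finsupp.add_apply, map_zero, Finsupp.coe_zero, Pi.zero_apply,
          hc0τ] at h
        linarith
      set xx : M := (-kk) • b 0 + (b.repr uσ 0 - kk) • b 1 with hxx
      set c : groupCohomology.cocycles₁ A := auxCobound A xx with hcdef
      have hcσ : ρ σ xx - xx = uσ := by
        rw [hxx]
        simp only [map_add, LinearMap.map_smul, hρσ0, hρσ1]
        conv_rhs => rw [hrepr uσ, ha]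
        module
      have hcτ : ρ τ xx - xx = uτ := by
        rw [hxx]
        simp only [map_add, LinearMap.map_smul, hρτ0, hρτ1]
        conv_rhs => rw [hrepr uτ, hcc]
        have hc2 : b.repr uτ 0 = 2 * kk - b.repr uσ 0 := by linarith
        rw [hc2]
        module
      have hfc : ∀ g, (f - c) g = 0 := by
        apply aux_cocycle_zero (f - c) hgen
        intro s hs
        rcases hs with hs | hs
        · rw [hs]
          have hcu : c σ = uσ := hcσ
          have h1 : (f - c) σ = f σ - c σ := rfl
          rw [h1, sub_eq_zero]
          exact huσ_def.symm.trans hcu.symm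
        · rw [Set.mem_singleton_iff] at hs
          rw [hs]
          have hcu : c τ = uτ := hcτ
          have h1 : (f - c) τ = f τ - c τ := rfl
          rw [h1, sub_eq_zero]
          exact huτ_def.symm.trans hcu.symm
      refine (groupCohomology.H1π_eq_zero_iff f).2 ⟨xx, funext fun g => ?_⟩
      have h2 : f g - c g = 0 := hfc g
      rw [sub_eq_zero] at h2
      exact h2.symm
    have hπsurj : Function.Surjective (groupCohomology.H1π A).hom :=
      (ModuleCat.epi_iff_surjective _).1 inferInstance
    exact ⟨(LinearMap.quotKerEquivOfSurjective (groupCohomology.H1π A).hom hπsurj).symm.trans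
      (LinearEquiv.ofBijective Φ ⟨hinj, hsurj⟩)⟩
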